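/- arXiv:1409.0496 — 2 statements merged into one kernel-verified Lean document; each statement's English description precedes it below -/
import Mathlib

section
/- Let φ be a polynomially bounded numbering with degree p, and for k ≥ 0 let d(k) = p^{k−1} + p^{k−2} + … + p + 1 = Σ_{i<k} p^i. Then there exists a positive integer a such that for every sufficiently large n, the interval I_n = {2^{a·d(n)}+1, …, 2^{a·d(n+1)}} satisfies |M_φ ∩ I_n| > 2^{−a·p^n} · |I_n|. -/
/-- A numbering: a family of partial functions `φ_e : ℕ →. ℕ` such that the
two-variable map `(e, x) ↦ φ_e x` is partial recursive. -/
def PartrecNumbering (φ : ℕ → ℕ →. ℕ) : Prop := Partrec₂ φ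

/-- `φ` is acceptable: every numbering translates into it via a computable function. -/
def Acceptable (φ : ℕ → ℕ →. ℕ) : Prop :=
  ∀ ψ : ℕ → ℕ →. ℕ, PartrecNumbering ψ → ∃ f : ℕ → ℕ, Computable f ∧ ∀ e, φ (f e) = ψ e

/-- `φ` has the Kolmogorov property: every numbering translates into it with
linearly bounded (not necessarily computable) translation. -/
def KolmogorovProperty (φ : ℕ → ℕ →. ℕ) : Prop :=
  ∀ ψ : ℕ → ℕ →. ℕ, PartrecNumbering ψ → ∃ c : ℕ, ∀ e, ∃ j, j ≤ c * e + c ∧ φ j = ψ e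

/-- `φ` is computably bounded: every numbering translates into it with a
computable bound on the translated index. -/
def ComputablyBounded (φ : ℕ → ℕ →. ℕ) : Prop :=
  ∀ ψ : ℕ → ℕ →. ℕ, PartrecNumbering ψ → ∃ f : ℕ → ℕ, Computable f ∧ ∀ e, ∃ j, j ≤ f e ∧ φ j = ψ e

/-- `φ` is polynomially bounded with degree `p`. -/
def PolyBounded (φ : ℕ → ℕ →. ℕ) (p : ℕ) : Prop :=
  ∀ ψ : ℕ → ℕ →. ℕ, PartrecNumbering ψ → ∃ c : ℕ, ∀ e, ∃ j, j ≤ c * e ^ p + c ∧ φ j = ψ e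

/-- The set of `φ`-minimal indices. -/
def MINset (φ : ℕ → ℕ →. ℕ) : Set ℕ := {e | ∀ j < e, φ j ≠ φ e}

/-- Minimal indices of functions converging exactly on input 0. -/
def Mset (φ : ℕ → ℕ →. ℕ) : Set ℕ :=
  {e | e ∈ MINset φ ∧ (φ e 0).Dom ∧ ∀ x ≥ 1, ¬ (φ e x).Dom}

/-- `minIndex φ e` is the minimal index computing the same function as `e`. -/
noncomputable def minIndex (φ : ℕ → ℕ →. ℕ) (e : ℕ) : ℕ := sInf {j | φ j = φ e}

/-- A partial recursive `U` is optimal: every partial recursive `V` is simulated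
with only linear increase of programs. -/
def OptimalMachine (U : ℕ →. ℕ) : Prop :=
  Nat.Partrec U ∧ ∀ V : ℕ →. ℕ, Nat.Partrec V →
    ∃ c : ℕ, ∀ p, (V p).Dom → ∃ q, q ≤ c * p + c ∧ U q = V p

/-- Kolmogorov complexity of `x` with respect to `U`: the least binary length of
a `U`-program for `x`. (`Nat.size q` is the binary length of `q`.) -/
noncomputable def Cpx (U : ℕ →. ℕ) (x : ℕ) : ℕ :=
  sInf {n | ∃ q, U q = Part.some x ∧ Nat.size q = n}

/-- Kolmogorov complexity of (the canonical code of) a finite set. -/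
noncomputable def CpxFinset (U : ℕ →. ℕ) (A : Finset ℕ) : ℕ :=
  Cpx U (Encodable.encode A)

/-- `A` is `(m,k)`-recursive: a computable labelling of `k`-tuples that is
correct in at least `m` coordinates on every tuple. -/
def MKRecursive (m k : ℕ) (A : Set ℕ) : Prop :=
  ∃ f : (Fin k → ℕ) → Fin k → Bool, Computable f ∧
    ∀ x : Fin k → ℕ, m ≤ {i : Fin k | (f x i = true ↔ x i ∈ A)}.ncard

/-- Density of elements of `M_φ` in the intervals
`I_n = {2^(a*d n)+1, ..., 2^(a*d (n+1))}`, where `d k = Σ_{i<k} p^i`. -/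
theorem density_of_Mset_in_intervals
    (φ : ℕ → ℕ →. ℕ) (hφ : PartrecNumbering φ) (p : ℕ) (hp : 0 < p)
    (hpb : PolyBounded φ p) :
    ∃ a : ℕ, 0 < a ∧ ∃ N : ℕ, ∀ n ≥ N,
      ((Mset φ ∩ Set.Icc (2 ^ (a * ∑ i ∈ Finset.range n, p ^ i) + 1)
          (2 ^ (a * ∑ i ∈ Finset.range (n + 1), p ^ i))).ncard : ℝ) >
        (2 : ℝ) ^ (-(a * p ^ n : ℤ)) *
          ((Set.Icc (2 ^ (a * ∑ i ∈ Finset.range n, p ^ i) + 1)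
            (2 ^ (a * ∑ i ∈ Finset.range (n + 1), p ^ i)) : Set ℕ)).ncard := by
    classical
  set ψ : ℕ → ℕ →. ℕ := fun e x => if x = 0 then Part.some e else Part.none with hψdef
  have hψ : PartrecNumbering ψ := by
    have h : Primrec (fun q : ℕ × ℕ => if q.2 = 0 then some q.1 else (none : Option ℕ)) :=
      Primrec.ite (Primrec.eq.comp Primrec.snd (Primrec.const 0))
        (Primrec.option_some.comp Primrec.fst) (Primrec.const none)
    have h2 := Computable.ofOption h.to_comp
    refine Partrec.of_eq h2 fun q => ?_
    by_cases hq : q.2 = 0 <;> simp [hψdef, hq]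
  obtain ⟨c, hc⟩ := hpb ψ hψ
  -- minimal indices of the functions ψ e
  have hm : ∀ e : ℕ, ∃ mv : ℕ, φ mv = ψ e ∧ mv ≤ c * e ^ p + c ∧ mv ∈ Mset φ := by
    intro e
    obtain ⟨j, hj, hje⟩ := hc e
    have hne : {k | φ k = ψ e}.Nonempty := ⟨j, hje⟩
    refine ⟨sInf {k | φ k = ψ e}, Nat.sInf_mem hne, le_trans (Nat.sInf_le hje) hj, ?_, ?_, ?_⟩
    · intro k hk hkeq
      have : φ k = ψ e := by rw [hkeq]; exact Nat.sInf_mem hne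
      exact absurd (Nat.sInf_le this) (not_le.mpr hk)
    · rw [Nat.sInf_mem hne]; simp [hψdef]
    · intro x hx
      rw [Nat.sInf_mem hne]
      simp [hψdef, Nat.one_le_iff_ne_zero.mp hx]
  choose m hm1 hm2 hm3 using hm
  have hminj : Function.Injective m := by
    intro e1 e2 h12
    have : ψ e1 = ψ e2 := by rw [← hm1 e1, h12, hm1 e2]
    have h0 : ψ e1 0 = ψ e2 0 := by rw [this]
    simpa [hψdef] using h0
  refine ⟨p + c + 1, by positivity, 0, fun n _ => ?_⟩
  set a := p + c + 1 with ha
  set dn := ∑ i ∈ Finset.range n, p ^ i with hdn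
  set L : ℕ := 2 ^ (a * dn) with hL
  set R : ℕ := 2 ^ (a * ∑ i ∈ Finset.range (n + 1), p ^ i) with hR
  have hLpos : 0 < L := Nat.pow_pos (by norm_num)
  have hd1 : (∑ i ∈ Finset.range (n + 1), p ^ i) = dn + p ^ n := Finset.sum_range_succ _ n
  have hd2 : (∑ i ∈ Finset.range (n + 1), p ^ i) = p * dn + 1 := by
    rw [Finset.sum_range_succ' (fun i => p ^ i) n]
    rw [hdn, Finset.mul_sum]
    simp [pow_succ, mul_comm]
  -- bound : for e ≤ 2L, m e ≤ R
  have hbound : ∀ e ≤ 2 * L, m e ≤ R := by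
    intro e he
    refine le_trans (hm2 e) ?_
    have h1 : c * e ^ p + c ≤ c * (2 * L) ^ p + c :=
      add_le_add_left (Nat.mul_le_mul_left c (Nat.pow_le_pow_left he p)) c
    refine le_trans h1 ?_
    have h2 : (2 * L) ^ p = 2 ^ p * 2 ^ (p * (a * dn)) := by
      rw [mul_pow, hL, ← pow_mul, mul_comm (a * dn) p]
    have hRe : R = 2 ^ a * 2 ^ (p * (a * dn)) := by
      rw [hR, hd2, ← pow_add]
      ring_nf
    rw [h2, hRe]
    have hc2 : c * 2 ^ p + c ≤ 2 ^ a := by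
      have h3 : c < 2 ^ c := Nat.lt_two_pow_self
      have : c * 2 ^ p + c ≤ 2 ^ c * 2 ^ p + 2 ^ c * 2 ^ p :=
        add_le_add (Nat.mul_le_mul_right _ h3.le)
          (le_trans h3.le (Nat.le_mul_of_pos_right _ (Nat.pow_pos (by norm_num))))
      calc c * 2 ^ p + c ≤ 2 ^ c * 2 ^ p + 2 ^ c * 2 ^ p := this
        _ = 2 * 2 ^ (c + p) := by rw [← pow_add]; ring
        _ = 2 ^ (c + p + 1) := (pow_succ' 2 (c + p)).symm
        _ = 2 ^ a := by rw [ha, Nat.add_comm c p]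
    calc c * (2 ^ p * 2 ^ (p * (a * dn))) + c
        = c * 2 ^ p * 2 ^ (p * (a * dn)) + c := by ring
      _ ≤ c * 2 ^ p * 2 ^ (p * (a * dn)) + c * 2 ^ (p * (a * dn)) :=
          add_le_add_right (Nat.le_mul_of_pos_right _ (Nat.pow_pos (by norm_num))) _
      _ = (c * 2 ^ p + c) * 2 ^ (p * (a * dn)) := by ring
      _ ≤ 2 ^ a * 2 ^ (p * (a * dn)) := Nat.mul_le_mul_right _ hc2
  -- the finsets
  set T : Finset ℕ := (Finset.range (2 * L + 1)).image m with hT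
  have hTcard : T.card = 2 * L + 1 := by
    rw [hT, Finset.card_image_of_injective _ hminj, Finset.card_range]
  set T' : Finset ℕ := T.filter (fun x => L < x) with hT'
  have hT'card : L ≤ T'.card := by
    have hsplit : T'.card + (T.filter (fun x => ¬ L < x)).card = T.card := by
      rw [hT']
      exact Finset.card_filter_add_card_filter_not (p := fun x => L < x)
    have hle : (T.filter (fun x => ¬ L < x)).card ≤ L + 1 := by
      have h1 : T.filter (fun x => ¬ L < x) ⊆ Finset.Iic L := fun x hx =>
        Finset.mem_Iic.mpr (not_lt.mp (Finset.mem_filter.mp hx).2)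
      calc (T.filter (fun x => ¬ L < x)).card ≤ (Finset.Iic L).card :=
            Finset.card_le_card h1
        _ = L + 1 := Nat.card_Iic L
    omega
  have hsub : (T' : Set ℕ) ⊆ Mset φ ∩ Set.Icc (L + 1) R := by
    intro x hx
    simp only [hT', Finset.coe_filter, Set.mem_setOf_eq, hT] at hx
    obtain ⟨hxT, hxL⟩ := hx
    obtain ⟨e, he, rfl⟩ := Finset.mem_image.mp hxT
    have heL : e ≤ 2 * L := Nat.lt_succ_iff.mp (Finset.mem_range.mp he)
    exact ⟨hm3 e, Nat.succ_le_of_lt hxL, hbound e heL⟩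
  have hfin : (Mset φ ∩ Set.Icc (L + 1) R).Finite :=
    Set.Finite.inter_of_right (Set.finite_Icc _ _) _
  have hcount : L ≤ (Mset φ ∩ Set.Icc (L + 1) R).ncard := by
    have h := Set.ncard_le_ncard hsub hfin
    rw [Set.ncard_coe_finset] at h
    exact le_trans hT'card h
  -- cardinality of the interval
  have hIcc : (Set.Icc (L + 1) R : Set ℕ).ncard = R - L := by
    rw [← Finset.coe_Icc, Set.ncard_coe_finset, Nat.card_Icc]
    omega
  -- now the real-number estimate
  have hLR : L < R := by
    rw [hL, hR, hd1]
    have hpn : 0 < p ^ n := pow_pos hp n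
    have hapos : 0 < a := by rw [ha]; omega
    exact Nat.pow_lt_pow_right one_lt_two (by nlinarith)
  have hRreal : (R : ℝ) = (L : ℝ) * 2 ^ (a * p ^ n) := by
    rw [hR, hL, hd1]
    push_cast
    rw [mul_add, pow_add]
  have hz : (2 : ℝ) ^ (-(a * p ^ n : ℤ)) = ((2 : ℝ) ^ (a * p ^ n : ℕ))⁻¹ := by
    rw [zpow_neg]
    norm_cast
  calc (2 : ℝ) ^ (-(a * p ^ n : ℤ)) * ((Set.Icc (L + 1) R : Set ℕ)).ncard
      = ((2 : ℝ) ^ (a * p ^ n : ℕ))⁻¹ * ((R : ℝ) - L) := by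
        rw [hz, hIcc]
        congr 1
        push_cast [Nat.cast_sub hLR.le]
        ring
    _ < ((2 : ℝ) ^ (a * p ^ n : ℕ))⁻¹ * (R : ℝ) := by
        apply mul_lt_mul_of_pos_left _ (by positivity)
        have : (0 : ℝ) < L := by exact_mod_cast hLpos
        linarith
    _ = (L : ℝ) := by
        rw [hRreal]
        field_simp
    _ ≤ ((Mset φ ∩ Set.Icc (L + 1) R).ncard : ℝ) := by exact_mod_cast hcount
end

section
/- For every computably bounded numbering φ and every positive integer k, there is no computable function f mapping each e ∈ ℕ to a finite set f(e) ⊆ ℕ of cardinality at most k such that min_φ(e) ∈ f(e) for all e. -/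
set_option maxHeartbeats 1000000

namespace NoShortlist

open Nat.Partrec (Code)
open Nat.Partrec.Code


/-- membership in a bitmask -/
def Mmem (x M : ℕ) : Prop := M.testBit x = true

/-- the finset of bits of a mask -/
def bitF (M : ℕ) : Finset ℕ := (Finset.range (M + 1)).filter fun x => M.testBit x = true

/-- number of elements (bits) of a mask -/
def Mcard (M : ℕ) : ℕ := (bitF M).card

/-- cut a mask at bound b (keep bits ≤ b) -/
def cut (M b : ℕ) : ℕ := M % 2 ^ (b + 1)

lemma mem_bitF {x M : ℕ} : x ∈ bitF M ↔ Mmem x M := by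
  constructor
  · intro h; exact (Finset.mem_filter.1 h).2
  · intro h
    refine Finset.mem_filter.2 ⟨Finset.mem_range.2 ?_, h⟩
    have h1 : 2 ^ x ≤ M := Nat.ge_two_pow_of_testBit h
    have h2 : x < 2 ^ x := Nat.lt_two_pow_self
    omega

lemma Mmem_cut {x M b : ℕ} : Mmem x (cut M b) ↔ Mmem x M ∧ x ≤ b := by
  unfold Mmem cut
  rw [Nat.testBit_mod_two_pow]
  constructor
  · intro h
    have h1 := Bool.and_elim_left h
    have h2 := Bool.and_elim_right h
    have h3 : x < b + 1 := of_decide_eq_true h1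
    exact ⟨h2, by omega⟩
  · rintro ⟨h1, h2⟩
    have h3 : x < b + 1 := by omega
    simp [h1, h3]

lemma bitF_subset {M' M : ℕ} (h : ∀ x, Mmem x M' → Mmem x M) : bitF M' ⊆ bitF M := by
  intro x hx; exact mem_bitF.2 (h x (mem_bitF.1 hx))

lemma Mcard_le {M' M : ℕ} (h : ∀ x, Mmem x M' → Mmem x M) : Mcard M' ≤ Mcard M :=
  Finset.card_le_card (bitF_subset h)

lemma Mcard_lt {M' M : ℕ} (h : ∀ x, Mmem x M' → Mmem x M) (x : ℕ) (hx : Mmem x M)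
    (hnx : ¬ Mmem x M') : Mcard M' < Mcard M :=
  Finset.card_lt_card ⟨bitF_subset h, fun hs => hnx (mem_bitF.1 (hs (mem_bitF.2 hx)))⟩

lemma not_Mmem_of_card_zero {M : ℕ} (h : Mcard M ≤ 0) (x : ℕ) : ¬ Mmem x M := by
  intro hx
  have : x ∈ bitF M := mem_bitF.2 hx
  have : 0 < Mcard M := Finset.card_pos.2 ⟨x, this⟩
  omega

lemma exists_high_bit {M b : ℕ} (h : 2 ^ (b + 1) ≤ M) : ∃ x, Mmem x M ∧ b < x := by
  obtain ⟨i, hi, hbit⟩ := Nat.exists_ge_and_testBit_of_ge_two_pow h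
  exact ⟨i, hbit, by omega⟩



open Denumerable

def fstep (p : ℕ × ℕ) (m : ℕ) : ℕ × ℕ := (m + p.1 + 1, p.2 + 2 ^ (m + p.1))

lemma testBit_add_pow {acc t x : ℕ} (hacc : ∀ y, acc.testBit y = true → y < t) :
    (acc + 2 ^ t).testBit x = true ↔ (acc.testBit x = true ∨ x = t) := by
  have haccx : acc < 2 ^ t := Nat.lt_pow_two_of_testBit acc (fun i hi => by
    by_contra hne
    have := hacc i (by revert hne; cases acc.testBit i <;> simp)
    omega)
  rcases lt_trichotomy x t with h | h | h
  · rw [Nat.add_comm, Nat.testBit_two_pow_add_gt h]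
    constructor
    · exact Or.inl
    · rintro (hb | hb)
      · exact hb
      · omega
  · subst h
    rw [Nat.add_comm, Nat.testBit_two_pow_add_eq]
    have : acc.testBit x = false := Nat.testBit_lt_two_pow haccx
    simp [this]
  · have hlt : acc + 2 ^ t < 2 ^ x := by
      have h1 : 2 ^ (t+1) ≤ 2 ^ x := Nat.pow_le_pow_right (by norm_num) (by omega)
      have h2 : 2 ^ t + 2 ^ t = 2 ^ (t+1) := by ring
      omega
    have hz : (acc + 2 ^ t).testBit x = false := Nat.testBit_lt_two_pow hlt
    rw [hz]
    constructor
    · intro hh; exact absurd hh (by simp)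
    · rintro (hb | hb)
      · have := hacc x hb; omega
      · omega

lemma fold_testBit : ∀ (l : List ℕ) (n acc : ℕ),
    (∀ y, acc.testBit y = true → y < n) → ∀ x,
    ((l.foldl fstep (n, acc)).2.testBit x = true ↔
      (acc.testBit x = true ∨ x ∈ Denumerable.raise' l n)) := by
  intro l
  induction l with
  | nil => intro n acc h x; simp [Denumerable.raise']
  | cons m l ih =>
    intro n acc h x
    have hstep : List.foldl fstep (n, acc) (m :: l)
        = List.foldl fstep (m + n + 1, acc + 2 ^ (m + n)) l := by
      simp [fstep]
    rw [hstep]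
    have hacc' : ∀ y, (acc + 2 ^ (m + n)).testBit y = true → y < m + n + 1 := by
      intro y hy
      rw [testBit_add_pow (fun y hy => by have := h y hy; omega)] at hy
      rcases hy with hy | hy
      · have := h y hy; omega
      · omega
    rw [ih (m + n + 1) (acc + 2 ^ (m + n)) hacc' x]
    rw [testBit_add_pow (fun y hy => by have := h y hy; omega)]
    show _ ↔ _ ∨ x ∈ (m + n) :: Denumerable.raise' l (m + n + 1)
    simp only [List.mem_cons]
    tauto

/-- encode of a finset w.r.t. the `Primcodable` instance -/
def encF (s : Finset ℕ) : ℕ := @Encodable.encode (Finset ℕ) Primcodable.toEncodable s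

def maskOf (s : Finset ℕ) : ℕ :=
  ((Denumerable.ofNat (List ℕ) (encF s)).foldl fstep (0, 0)).2

lemma ofNat_finset (n : ℕ) :
    Denumerable.ofNat (Finset ℕ) n =
      Finset.map (Denumerable.eqv ℕ).symm.toEmbedding
        (Denumerable.raise'Finset (Denumerable.ofNat (List ℕ) n) 0) :=
  Denumerable.ofNat_of_decode rfl

lemma ofNat_encF (s : Finset ℕ) : Denumerable.ofNat (Finset ℕ) (encF s) = s :=
  Denumerable.ofNat_encode s

lemma maskOf_mem (s : Finset ℕ) (x : ℕ) : (maskOf s).testBit x = true ↔ x ∈ s := by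
  have h0 : ∀ y, (0 : ℕ).testBit y = true → y < 0 := by simp [Nat.zero_testBit]
  rw [maskOf, fold_testBit _ 0 0 h0 x]
  simp only [Nat.zero_testBit, false_or]
  conv_rhs => rw [← ofNat_encF s]
  rw [ofNat_finset]
  rw [Finset.mem_map]
  constructor
  · intro hx
    refine ⟨x, ?_, Denumerable.ofNat_nat x⟩
    show x ∈ Denumerable.raise'Finset _ 0
    unfold Denumerable.raise'Finset
    exact Multiset.mem_coe.2 (by simpa using hx)
  · rintro ⟨y, hy, hyx⟩
    have h1 : (Denumerable.eqv ℕ).symm.toEmbedding y = y := Denumerable.ofNat_nat y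
    rw [h1] at hyx
    subst hyx
    revert hy
    show y ∈ Denumerable.raise'Finset _ 0 → _
    unfold Denumerable.raise'Finset
    intro hy
    exact Or.inr (Multiset.mem_coe.1 hy)



lemma hpow2 : Primrec₂ ((· ^ ·) : ℕ → ℕ → ℕ) := Primrec₂.unpaired'.1 Nat.Primrec.pow

lemma htestBit : Primrec₂ Nat.testBit := by
  have h : Primrec₂ (fun x i => decide (x / 2 ^ i % 2 = 1) : ℕ → ℕ → Bool) := by
    apply (Primrec.eq (α := ℕ)).decide.comp
    · exact (Primrec.nat_mod.comp ((Primrec.nat_div).comp Primrec.fst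
        (hpow2.comp (Primrec.const 2) Primrec.snd)) (Primrec.const 2))
    · exact Primrec.const 1
  exact h.of_eq fun x i => (Nat.testBit_eq_decide_div_mod_eq).symm

lemma hcut : Primrec₂ cut :=
  Primrec.nat_mod.comp Primrec.fst (hpow2.comp (Primrec.const 2) (Primrec.succ.comp Primrec.snd))

-- minIndex facts
lemma minIndex_le {φ : ℕ → ℕ →. ℕ} {e j : ℕ} (h : φ j = φ e) : minIndex φ e ≤ j :=
  Nat.sInf_le h

lemma minIndex_le_self (φ : ℕ → ℕ →. ℕ) (e : ℕ) : minIndex φ e ≤ e :=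
  minIndex_le rfl

lemma minIndex_spec (φ : ℕ → ℕ →. ℕ) (e : ℕ) : φ (minIndex φ e) = φ e :=
  Nat.sInf_mem (⟨e, rfl⟩ : {j | φ j = φ e}.Nonempty)

-- the family of functions defined exactly at 0
def Omega (v : ℕ) : ℕ →. ℕ := fun x => Part.ofOption (if x = 0 then some v else none)

lemma Omega_zero (v : ℕ) : v ∈ Omega v 0 := by simp [Omega]

lemma Omega_numbering : Partrec₂ Omega := by
  have h : Computable fun p : ℕ × ℕ => if p.2 = 0 then some p.1 else (none : Option ℕ) := by
    apply Computable.of_eq (f := fun p : ℕ × ℕ => cond (p.2 == 0) (some p.1) none)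
    · exact Computable.cond (Primrec.beq.comp Primrec.snd (Primrec.const 0)).to_comp
        (Computable.option_some.comp Computable.fst) (Computable.const none)
    · intro p
      rcases Nat.eq_zero_or_pos p.2 with h | h
      · simp [h]
      · have hb : (p.2 == 0) = false := by
          simp [Nat.beq_eq_true_eq]; omega
        have hi : ¬ (p.2 = 0) := by omega
        simp [hb, hi]
  exact (Computable.ofOption h).to₂

-- classical bound on values at 0 below an index bound
lemma val_bound (φ : ℕ → ℕ →. ℕ) (N : ℕ) : ∃ V, ∀ t ≤ N, ∀ v, v ∈ φ t 0 → v ≤ V := by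
  classical
  refine ⟨(Finset.range (N + 1)).sup fun t =>
    if h : (φ t 0).Dom then (φ t 0).get h else 0, ?_⟩
  intro t ht v hv
  have hdom : (φ t 0).Dom := Part.dom_iff_mem.2 ⟨v, hv⟩
  have hget : (φ t 0).get hdom = v := Part.get_eq_of_mem hv _
  calc v = (φ t 0).get hdom := hget.symm
    _ ≤ _ := by
        have := Finset.le_sup (f := fun t =>
          if h : (φ t 0).Dom then (φ t 0).get h else 0)
          (Finset.mem_range.2 (by omega : t < N + 1))
        simpa [hdom] using this

-- a mu-selector for Omega classes
noncomputable def mu (φ : ℕ → ℕ →. ℕ) (v : ℕ) : ℕ := sInf {j | φ j = Omega v}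

lemma mu_spec {φ : ℕ → ℕ →. ℕ} {v : ℕ} (hex : ∃ j, φ j = Omega v) : φ (mu φ v) = Omega v :=
  Nat.sInf_mem hex

lemma minIndex_mu {φ : ℕ → ℕ →. ℕ} {v : ℕ} (hex : ∃ j, φ j = Omega v) :
    minIndex φ (mu φ v) = mu φ v := by
  have h1 : {j | φ j = φ (mu φ v)} = {j | φ j = Omega v} := by
    ext j; simp [mu_spec hex]
  rw [minIndex, h1]; rfl



open Nat.Partrec (Code)
open Nat.Partrec.Code

/-- self-referential search numbering -/
def PsiR (φ : ℕ → ℕ →. ℕ) (R : ℕ → ℕ → ℕ → Bool) (D : ℕ → ℕ) : ℕ → ℕ →. ℕ :=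
  fun p x =>
    (eval (Denumerable.ofNat Code p.unpair.1) p.unpair.2).bind
      fun Bv => (Nat.rfind fun w => Part.some (R Bv p.unpair.2 w)).bind
        fun w => φ (D w) x

lemma PsiR_numbering (φ : ℕ → ℕ →. ℕ) (hφ : Partrec₂ φ)
    (R : ℕ → ℕ → ℕ → Bool) (hR : Computable fun a : (ℕ × ℕ) × ℕ => R a.1.1 a.1.2 a.2)
    (D : ℕ → ℕ) (hD : Computable D) : PartrecNumbering (PsiR φ R D) := by
  have hunpair : Computable (Nat.unpair) := Primrec.unpair.to_comp
  have h1 : Partrec fun q : ℕ × ℕ =>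
      eval (Denumerable.ofNat Code q.1.unpair.1) q.1.unpair.2 :=
    eval_part.comp
      ((Computable.ofNat Code).comp ((Computable.fst.comp hunpair).comp Computable.fst))
      ((Computable.snd.comp hunpair).comp Computable.fst)
  have hrf : Partrec fun a : (ℕ × ℕ) × ℕ =>
      Nat.rfind (fun w => (Part.some (R a.2 a.1.1.unpair.2 w) : Part Bool)) := by
    apply Partrec.rfind
    have hcc : Computable fun z : ((ℕ × ℕ) × ℕ) × ℕ => R z.1.2 z.1.1.1.unpair.2 z.2 :=
      hR.comp (Computable.pair
        (Computable.pair (Computable.snd.comp Computable.fst)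
          ((Computable.snd.comp hunpair).comp
            (Computable.fst.comp (Computable.fst.comp Computable.fst))))
        Computable.snd)
    exact Computable₂.partrec₂ hcc.to₂
  have hafter : Partrec₂ fun (a : (ℕ × ℕ) × ℕ) (w : ℕ) => φ (D w) a.1.2 := by
    have hcc : Partrec fun z : ((ℕ × ℕ) × ℕ) × ℕ => φ (D z.2) z.1.1.2 :=
      hφ.comp (hD.comp Computable.snd)
        ((Computable.snd.comp Computable.fst).comp Computable.fst)
    exact hcc.to₂
  have hbody : Partrec fun a : (ℕ × ℕ) × ℕ =>
      (Nat.rfind fun w => Part.some (R a.2 a.1.1.unpair.2 w)).bind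
        fun w => φ (D w) a.1.2 := hrf.bind hafter
  show Partrec fun q : ℕ × ℕ => PsiR φ R D q.1 q.2
  exact h1.bind hbody.to₂

lemma selfbound (φ : ℕ → ℕ →. ℕ) (hφ : Partrec₂ φ) (hcb : ComputablyBounded φ)
    (R : ℕ → ℕ → ℕ → Bool) (hR : Computable fun a : (ℕ × ℕ) × ℕ => R a.1.1 a.1.2 a.2)
    (D : ℕ → ℕ) (hD : Computable D) :
    ∃ B : ℕ → ℕ, Computable B ∧
      ∀ e w₀, w₀ ∈ Nat.rfind (fun w => Part.some (R (B e) e w)) →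
        ∃ j, j ≤ B e ∧ φ j = φ (D w₀) := by
  obtain ⟨b, hbc, hb⟩ := hcb _ (PsiR_numbering φ hφ R hR D hD)
  have hF : Partrec₂ fun (c : Code) (e : ℕ) =>
      (Part.some (b (Nat.pair (Encodable.encode c) e)) : Part ℕ) := by
    have hcc : Computable fun z : Code × ℕ => b (Nat.pair (Encodable.encode z.1) z.2) :=
      hbc.comp (Primrec₂.natPair.to_comp.comp
        (Computable.encode.comp Computable.fst) Computable.snd)
    exact Computable₂.partrec₂ hcc.to₂
  obtain ⟨cs, hcs⟩ := fixed_point₂ hF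
  refine ⟨fun e => b (Nat.pair (Encodable.encode cs) e),
    hbc.comp (Primrec₂.natPair.to_comp.comp (Computable.const _) Computable.id), ?_⟩
  intro e w₀ hw₀
  have hΨeq : PsiR φ R D (Nat.pair (Encodable.encode cs) e) = φ (D w₀) := by
    funext x
    simp only [PsiR, Nat.unpair_pair]
    rw [show eval (Denumerable.ofNat Code (Encodable.encode cs)) e
        = Part.some (b (Nat.pair (Encodable.encode cs) e)) from by
      rw [Denumerable.ofNat_encode, hcs]]
    rw [Part.bind_some]
    rw [Part.eq_some_iff.2 hw₀]
    rw [Part.bind_some]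
  obtain ⟨j, hj, hφj⟩ := hb (Nat.pair (Encodable.encode cs) e)
  exact ⟨j, hj, by rw [hφj, hΨeq]⟩

lemma no_min_seq (φ : ℕ → ℕ →. ℕ) (hφ : Partrec₂ φ) (hcb : ComputablyBounded φ)
    (g : ℕ → ℕ) (hg : Computable g)
    (hmin : ∀ n, minIndex φ (g n) = g n) (hunb : ∀ N, ∃ n, N < g n) : False := by
  have hR : Computable fun a : (ℕ × ℕ) × ℕ => decide (a.1.1 < g a.2) :=
    Primrec.nat_lt.decide.to_comp.comp (Computable.fst.comp Computable.fst) (hg.comp Computable.snd)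
  obtain ⟨B, hBc, hkey⟩ := selfbound φ hφ hcb (fun Bv _ w => decide (Bv < g w)) hR g hg
  obtain ⟨w, hw⟩ := hunb (B 0)
  have htrue : true ∈ (fun w => (Part.some (decide (B 0 < g w)) : Part Bool)) w := by
    simp [hw]
  have hdom : (Nat.rfind fun w => (Part.some (decide (B 0 < g w)) : Part Bool)).Dom :=
    Nat.rfind_dom.2 ⟨w, htrue, fun {_} _ => trivial⟩
  set w₀ := (Nat.rfind fun w => (Part.some (decide (B 0 < g w)) : Part Bool)).get hdom with hw₀
  have hw₀mem : w₀ ∈ Nat.rfind fun w => (Part.some (decide (B 0 < g w)) : Part Bool) :=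
    Part.get_mem hdom
  obtain ⟨j, hj, hφj⟩ := hkey 0 w₀ hw₀mem
  have h1 : minIndex φ (g w₀) ≤ j := minIndex_le hφj
  rw [hmin] at h1
  have h2 : B 0 < g w₀ := by
    have := Nat.rfind_spec hw₀mem
    simpa using this
  omega


lemma no_data (φ : ℕ → ℕ →. ℕ) (hφ : Partrec₂ φ) (hcb : ComputablyBounded φ) :
    ∀ (r : ℕ) (δ Λ : ℕ → ℕ), Computable δ → Computable Λ →
    (∀ i, Mcard (Λ i) ≤ r) →
    (∀ i, Mmem (minIndex φ (δ i)) (Λ i) ∨ minIndex φ (δ i) = δ i) →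
    (∀ n, ∃ i v, n < v ∧ v ∈ φ (δ i) 0) → False := by
  -- a code for the two-variable function
  have hpart : Nat.Partrec fun n : ℕ => φ n.unpair.1 n.unpair.2 :=
    Partrec.nat_iff.1 (hφ.comp (Computable.fst.comp Primrec.unpair.to_comp)
      (Computable.snd.comp Primrec.unpair.to_comp))
  obtain ⟨cφ, hcφ⟩ := exists_code.1 hpart
  have hstep_sound : ∀ t s v, evaln s cφ (Nat.pair t 0) = some v → v ∈ φ t 0 := by
    intro t s v h
    have h1 : v ∈ eval cφ (Nat.pair t 0) := evaln_sound (by rw [h]; rfl)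
    rw [hcφ] at h1
    simpa [Nat.unpair_pair] using h1
  have hstep_complete : ∀ t v, v ∈ φ t 0 → ∃ s, evaln s cφ (Nat.pair t 0) = some v := by
    intro t v h
    have h1 : v ∈ eval cφ (Nat.pair t 0) := by
      rw [hcφ]; simpa [Nat.unpair_pair] using h
    obtain ⟨s, hs⟩ := evaln_complete.1 h1
    exact ⟨s, hs⟩
  intro r
  induction r with
  | zero =>
    intro δ Λ hδ hΛ hcard hmem hvals
    have hmm : ∀ i, minIndex φ (δ i) = δ i := by
      intro i
      rcases hmem i with h | h
      · exact absurd h (not_Mmem_of_card_zero (hcard i) _)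
      · exact h
    apply no_min_seq φ hφ hcb δ hδ hmm
    intro N
    obtain ⟨V, hV⟩ := val_bound φ N
    obtain ⟨i, v, hv1, hv2⟩ := hvals (max N V)
    refine ⟨i, ?_⟩
    by_contra hle
    have : v ≤ V := hV (δ i) (by omega) v hv2
    omega
  | succ r IH =>
    intro δ Λ hδ hΛ hcard hmem hvals
    -- Phase 1 : pointwise bound on minimal indices
    have hψ1 : PartrecNumbering (fun i x => φ (δ i) x) :=
      show Partrec fun p : ℕ × ℕ => φ (δ p.1) p.2 from
        hφ.comp (hδ.comp Computable.fst) Computable.snd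
    obtain ⟨b₁, hb₁c, hb₁⟩ := hcb _ hψ1
    have hm₁ : ∀ i, minIndex φ (δ i) ≤ b₁ i := by
      intro i
      obtain ⟨j, hj, he⟩ := hb₁ i
      exact le_trans (minIndex_le he) hj
    set Λc : ℕ → ℕ := fun i => cut (Λ i) (b₁ i) with hΛcdef
    have hΛc_comp : Computable Λc := hcut.to_comp.comp hΛ hb₁c
    have hmemc : ∀ i, Mmem (minIndex φ (δ i)) (Λc i) ∨ minIndex φ (δ i) = δ i :=
      fun i => (hmem i).imp (fun h => Mmem_cut.2 ⟨h, hm₁ i⟩) id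
    have hcardc : ∀ i, Mcard (Λc i) ≤ r + 1 :=
      fun i => le_trans (Mcard_le (fun x hx => (Mmem_cut.1 hx).1)) (hcard i)
    -- Phase 2 : self-referential search
    set P : ℕ → ℕ → ℕ → Bool := fun Bv e w =>
      decide (e < (evaln w.unpair.2 cφ (Nat.pair (δ w.unpair.1) 0)).getD 0) &&
      (decide (Bv < δ w.unpair.1) && decide (2 ^ (Bv + 1) ≤ Λc w.unpair.1)) with hPdef
    have hui : Computable fun a : (ℕ × ℕ) × ℕ => a.2.unpair.1 :=
      (Computable.fst.comp Primrec.unpair.to_comp).comp Computable.snd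
    have hus : Computable fun a : (ℕ × ℕ) × ℕ => a.2.unpair.2 :=
      (Computable.snd.comp Primrec.unpair.to_comp).comp Computable.snd
    have hu : Computable fun a : (ℕ × ℕ) × ℕ =>
        (evaln a.2.unpair.2 cφ (Nat.pair (δ a.2.unpair.1) 0)).getD 0 :=
      Primrec.option_getD.to_comp.comp
        (primrec_evaln.to_comp.comp (Computable.pair (Computable.pair hus (Computable.const cφ))
          (Primrec₂.natPair.to_comp.comp (hδ.comp hui) (Computable.const 0))))
        (Computable.const 0)
    have hP : Computable fun a : (ℕ × ℕ) × ℕ => P a.1.1 a.1.2 a.2 := by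
      apply Primrec.and.to_comp.comp
      · exact Primrec.nat_lt.decide.to_comp.comp (Computable.snd.comp Computable.fst) hu
      · apply Primrec.and.to_comp.comp
        · exact Primrec.nat_lt.decide.to_comp.comp (Computable.fst.comp Computable.fst) (hδ.comp hui)
        · exact Primrec.nat_le.decide.to_comp.comp
            (hpow2.to_comp.comp (Computable.const 2)
              (Computable.succ.comp (Computable.fst.comp Computable.fst)))
            (hΛc_comp.comp hui)
    obtain ⟨B, hBc, hkey⟩ := selfbound φ hφ hcb P hP (fun w => δ w.unpair.1)
      (hδ.comp (Computable.fst.comp Primrec.unpair.to_comp))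
    by_cases hT : ∀ e, ∃ w, P (B e) e w = true
    · -- the search always succeeds : descend
      have hdom : ∀ e, (Nat.rfind fun w => (Part.some (P (B e) e w) : Part Bool)).Dom := by
        intro e
        obtain ⟨w, hw⟩ := hT e
        exact Nat.rfind_dom.2 ⟨w, by simp [hw], fun {_} _ => trivial⟩
      set wfn : ℕ → ℕ :=
        fun e => (Nat.rfind fun w => (Part.some (P (B e) e w) : Part Bool)).get (hdom e)
        with hwfndef
      have hwmem : ∀ e, wfn e ∈ Nat.rfind fun w => (Part.some (P (B e) e w) : Part Bool) :=
        fun e => Part.get_mem _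
      have hwfn_comp : Computable wfn := by
        have h1 : Partrec fun e => Nat.rfind fun w => (Part.some (P (B e) e w) : Part Bool) := by
          apply Partrec.rfind
          have hcc : Computable fun z : ℕ × ℕ => P (B z.1) z.1 z.2 :=
            hP.comp (Computable.pair
              (Computable.pair (hBc.comp Computable.fst) Computable.fst) Computable.snd)
          exact Computable₂.partrec₂ hcc.to₂
        exact h1.of_eq fun e => (Part.some_get (hdom e)).symm
      have hPe : ∀ e, P (B e) e (wfn e) = true := by
        intro e
        have := Nat.rfind_spec (hwmem e)
        simpa using this
      have hPe' : ∀ e,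
          e < (evaln (wfn e).unpair.2 cφ (Nat.pair (δ ((wfn e).unpair.1)) 0)).getD 0 ∧
          B e < δ ((wfn e).unpair.1) ∧ 2 ^ (B e + 1) ≤ Λc ((wfn e).unpair.1) := by
        intro e
        have h := hPe e
        rw [hPdef] at h
        simp only [Bool.and_eq_true, decide_eq_true_eq] at h
        exact ⟨h.1, h.2.1, h.2.2⟩
      have hvx : ∀ e, ∃ v, e < v ∧ v ∈ φ (δ ((wfn e).unpair.1)) 0 := by
        intro e
        obtain ⟨h1, _, _⟩ := hPe' e
        cases hev : evaln (wfn e).unpair.2 cφ (Nat.pair (δ ((wfn e).unpair.1)) 0) with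
        | none => rw [hev] at h1; simp at h1
        | some v =>
          rw [hev] at h1
          simp only [Option.getD_some] at h1
          exact ⟨v, h1, hstep_sound _ _ _ hev⟩
      have hminB : ∀ e, minIndex φ (δ ((wfn e).unpair.1)) ≤ B e := by
        intro e
        obtain ⟨j, hj, hφj⟩ := hkey e (wfn e) (hwmem e)
        exact le_trans (minIndex_le hφj) hj
      -- new data
      apply IH (fun e => δ ((wfn e).unpair.1)) (fun e => cut (Λc ((wfn e).unpair.1)) (B e))
      · exact hδ.comp ((Computable.fst.comp Primrec.unpair.to_comp).comp hwfn_comp)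
      · exact hcut.to_comp.comp
          (hΛc_comp.comp ((Computable.fst.comp Primrec.unpair.to_comp).comp hwfn_comp)) hBc
      · intro e
        obtain ⟨_, _, h3⟩ := hPe' e
        obtain ⟨x, hx, hxgt⟩ := exists_high_bit h3
        have hlt : Mcard (cut (Λc ((wfn e).unpair.1)) (B e)) < Mcard (Λc ((wfn e).unpair.1)) :=
          Mcard_lt (fun y hy => (Mmem_cut.1 hy).1) x hx
            (fun hmm => by have := (Mmem_cut.1 hmm).2; omega)
        have := hcardc ((wfn e).unpair.1)
        omega
      · intro e
        rcases hmemc ((wfn e).unpair.1) with h | h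
        · exact Or.inl (Mmem_cut.2 ⟨h, hminB e⟩)
        · obtain ⟨_, h2, _⟩ := hPe' e
          have := hminB e
          rw [h] at this
          omega
      · intro n
        obtain ⟨v, hv1, hv2⟩ := hvx n
        exact ⟨n, v, hv1, hv2⟩
    · -- the search fails at some e₀ : constant lists and a computable subset of MIN
      push_neg at hT
      obtain ⟨e₀, he₀⟩ := hT
      have hcons : ∀ i v, v ∈ φ (δ i) 0 → e₀ < v → B e₀ < δ i → Λc i < 2 ^ (B e₀ + 1) := by
        intro i v hv h1 h2
        obtain ⟨s, hs⟩ := hstep_complete (δ i) v hv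
        by_contra hge
        push_neg at hge
        apply he₀ (Nat.pair i s)
        rw [hPdef]
        simp only [Nat.unpair_pair, hs, Option.getD_some, Bool.and_eq_true, decide_eq_true_eq]
        exact ⟨h1, h2, hge⟩
      have hJ : ∃ J, ∀ n, ∃ i v, n < v ∧ v ∈ φ (δ i) 0 ∧ e₀ < v ∧ B e₀ < δ i ∧ Λc i = J := by
        by_contra hno
        push_neg at hno
        choose nJ hnJ using hno
        obtain ⟨V, hV⟩ := val_bound φ (B e₀)
        set N := Finset.sup (Finset.range (2 ^ (B e₀ + 1))) nJ with hNdef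
        obtain ⟨i, v, hv1, hv2⟩ := hvals (max (max N V) e₀)
        have hδi : B e₀ < δ i := by
          by_contra hle
          have : v ≤ V := hV (δ i) (by omega) v hv2
          omega
        have hJlt : Λc i < 2 ^ (B e₀ + 1) := hcons i v hv2 (by omega) hδi
        have hsup : nJ (Λc i) ≤ N := Finset.le_sup (Finset.mem_range.2 hJlt)
        exact hnJ (Λc i) i v (by omega) hv2 (by omega) hδi rfl
      obtain ⟨J, hJ⟩ := hJ
      classical
      set yb := Finset.sup (bitF J) (fun j => if h : (φ j 0).Dom then (φ j 0).get h else 0)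
        with hybdef
      have hyb : ∀ j, Mmem j J → ∀ y, y ∈ φ j 0 → y ≤ yb := by
        intro j hj y hy
        have hdom : (φ j 0).Dom := Part.dom_iff_mem.2 ⟨y, hy⟩
        have hget : (φ j 0).get hdom = y := Part.get_eq_of_mem hy _
        calc y = (φ j 0).get hdom := hget.symm
          _ ≤ yb := by
              have := Finset.le_sup (f := fun j => if h : (φ j 0).Dom then (φ j 0).get h else 0)
                (mem_bitF.2 hj)
              simpa [hdom] using this
      -- the final computable sequence of minimal indices
      set Q : ℕ → ℕ → Bool := fun n w =>
        decide (n < (evaln w.unpair.2 cφ (Nat.pair (δ w.unpair.1) 0)).getD 0) &&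
        (decide (yb < (evaln w.unpair.2 cφ (Nat.pair (δ w.unpair.1) 0)).getD 0) &&
        (decide (e₀ < (evaln w.unpair.2 cφ (Nat.pair (δ w.unpair.1) 0)).getD 0) &&
        (decide (B e₀ < δ w.unpair.1) && decide (Λc w.unpair.1 = J)))) with hQdef
      have hQtot : ∀ n, ∃ w, Q n w = true := by
        intro n
        obtain ⟨i, v, hv1, hv2, hv3, hv4, hv5⟩ := hJ (max n yb)
        obtain ⟨s, hs⟩ := hstep_complete (δ i) v hv2
        refine ⟨Nat.pair i s, ?_⟩
        rw [hQdef]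
        simp only [Bool.and_eq_true, decide_eq_true_eq, Nat.unpair_pair, hs, Option.getD_some]
        exact ⟨by omega, by omega, hv3, hv4, hv5⟩
      have hdomQ : ∀ n, (Nat.rfind fun w => (Part.some (Q n w) : Part Bool)).Dom := by
        intro n
        obtain ⟨w, hw⟩ := hQtot n
        exact Nat.rfind_dom.2 ⟨w, by simp [hw], fun {_} _ => trivial⟩
      set wq : ℕ → ℕ :=
        fun n => (Nat.rfind fun w => (Part.some (Q n w) : Part Bool)).get (hdomQ n) with hwqdef
      have hwqmem : ∀ n, wq n ∈ Nat.rfind fun w => (Part.some (Q n w) : Part Bool) :=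
        fun n => Part.get_mem _
      have hQn : ∀ n, Q n (wq n) = true := by
        intro n
        have := Nat.rfind_spec (hwqmem n)
        simpa using this
      have hQn' : ∀ n,
          n < (evaln (wq n).unpair.2 cφ (Nat.pair (δ ((wq n).unpair.1)) 0)).getD 0 ∧
          yb < (evaln (wq n).unpair.2 cφ (Nat.pair (δ ((wq n).unpair.1)) 0)).getD 0 ∧
          e₀ < (evaln (wq n).unpair.2 cφ (Nat.pair (δ ((wq n).unpair.1)) 0)).getD 0 ∧
          B e₀ < δ ((wq n).unpair.1) ∧ Λc ((wq n).unpair.1) = J := by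
        intro n
        have h := hQn n
        rw [hQdef] at h
        simp only [Bool.and_eq_true, decide_eq_true_eq] at h
        exact ⟨h.1, h.2.1, h.2.2.1, h.2.2.2.1, h.2.2.2.2⟩
      have hvq : ∀ n, ∃ v, n < v ∧ yb < v ∧ v ∈ φ (δ ((wq n).unpair.1)) 0 := by
        intro n
        obtain ⟨h1, h2, _, _, _⟩ := hQn' n
        cases hev : evaln (wq n).unpair.2 cφ (Nat.pair (δ ((wq n).unpair.1)) 0) with
        | none => rw [hev] at h1; simp at h1
        | some v =>
          rw [hev] at h1; rw [hev] at h2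
          simp only [Option.getD_some] at h1 h2
          exact ⟨v, h1, h2, hstep_sound _ _ _ hev⟩
      have hwq_comp : Computable wq := by
        have h1 : Partrec fun n => Nat.rfind fun w => (Part.some (Q n w) : Part Bool) := by
          apply Partrec.rfind
          have hu2 : Computable fun z : ℕ × ℕ =>
              (evaln z.2.unpair.2 cφ (Nat.pair (δ z.2.unpair.1) 0)).getD 0 :=
            Primrec.option_getD.to_comp.comp
              (primrec_evaln.to_comp.comp (Computable.pair
                (Computable.pair ((Computable.snd.comp Primrec.unpair.to_comp).comp Computable.snd)
                  (Computable.const cφ))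
                (Primrec₂.natPair.to_comp.comp
                  (hδ.comp ((Computable.fst.comp Primrec.unpair.to_comp).comp Computable.snd))
                  (Computable.const 0))))
              (Computable.const 0)
          have hcc : Computable fun z : ℕ × ℕ => Q z.1 z.2 := by
            rw [hQdef]
            apply Primrec.and.to_comp.comp
            · exact Primrec.nat_lt.decide.to_comp.comp Computable.fst hu2
            · apply Primrec.and.to_comp.comp
              · exact Primrec.nat_lt.decide.to_comp.comp (Computable.const yb) hu2
              · apply Primrec.and.to_comp.comp
                · exact Primrec.nat_lt.decide.to_comp.comp (Computable.const e₀) hu2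
                · apply Primrec.and.to_comp.comp
                  · exact Primrec.nat_lt.decide.to_comp.comp (Computable.const (B e₀))
                      (hδ.comp ((Computable.fst.comp Primrec.unpair.to_comp).comp Computable.snd))
                  · exact ((Primrec.eq (α := ℕ)).decide.to_comp).comp
                      (hΛc_comp.comp ((Computable.fst.comp Primrec.unpair.to_comp).comp
                        Computable.snd))
                      (Computable.const J)
          exact Computable₂.partrec₂ hcc.to₂
        exact h1.of_eq fun n => (Part.some_get (hdomQ n)).symm
      -- every selected index is minimal
      have hminq : ∀ n, minIndex φ (δ ((wq n).unpair.1)) = δ ((wq n).unpair.1) := by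
        intro n
        obtain ⟨v, _, hvyb, hvmem⟩ := hvq n
        rcases hmemc ((wq n).unpair.1) with h | h
        · exfalso
          obtain ⟨_, _, _, _, hJeq⟩ := hQn' n
          rw [hJeq] at h
          have hφeq : φ (minIndex φ (δ ((wq n).unpair.1))) = φ (δ ((wq n).unpair.1)) :=
            minIndex_spec φ _
          have : v ∈ φ (minIndex φ (δ ((wq n).unpair.1))) 0 := by rw [hφeq]; exact hvmem
          have := hyb _ h v this
          omega
        · exact h
      apply no_min_seq φ hφ hcb (fun n => δ ((wq n).unpair.1))
        (hδ.comp ((Computable.fst.comp Primrec.unpair.to_comp).comp hwq_comp)) hminq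
      intro N
      obtain ⟨V, hV⟩ := val_bound φ N
      obtain ⟨v, hv1, _, hv3⟩ := hvq V
      refine ⟨V, ?_⟩
      by_contra hle
      have : v ≤ V := hV _ (by omega) v hv3
      omega

end NoShortlist

/-- For a computably bounded numbering, no computable function mapping each
index to a list of at most `k` candidates always captures `min_φ(e)`. -/
theorem no_constant_size_shortlist
    (φ : ℕ → ℕ →. ℕ) (hφ : PartrecNumbering φ) (hcb : ComputablyBounded φ)
    (k : ℕ) (hk : 0 < k) :
    ¬ ∃ f : ℕ → Finset ℕ, Computable f ∧ (∀ e, (f e).card ≤ k) ∧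
        ∀ e, minIndex φ e ∈ f e := by
  open NoShortlist in
  rintro ⟨f, hf, hcard, hmin⟩
  -- computability of the bitmask of `f`
  have hfstep : Primrec₂ (fun (_ : List ℕ) (p : (ℕ × ℕ) × ℕ) => fstep p.1 p.2) := by
    have hm : Primrec fun z : List ℕ × ((ℕ × ℕ) × ℕ) => z.2.2 + z.2.1.1 :=
      Primrec.nat_add.comp (Primrec.snd.comp Primrec.snd)
        (Primrec.fst.comp (Primrec.fst.comp Primrec.snd))
    exact Primrec.pair (Primrec.succ.comp hm)
      (Primrec.nat_add.comp (Primrec.snd.comp (Primrec.fst.comp Primrec.snd))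
        (hpow2.comp (Primrec.const 2) hm))
  have hfold : Primrec fun l : List ℕ => (l.foldl fstep ((0 : ℕ), (0 : ℕ))).2 :=
    Primrec.snd.comp (Primrec.list_foldl Primrec.id (Primrec.const ((0 : ℕ), (0 : ℕ))) hfstep)
  have hmaskf : Computable fun e => maskOf (f e) :=
    hfold.to_comp.comp ((Computable.ofNat (List ℕ)).comp (Computable.encode.comp hf))
  -- the Omega family is realized
  obtain ⟨b₀, _, hb₀⟩ := hcb Omega Omega_numbering
  have hex : ∀ v, ∃ j, φ j = Omega v := by
    intro v; obtain ⟨j, _, hj⟩ := hb₀ v; exact ⟨j, hj⟩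
  have hmu_mem : ∀ v, (maskOf (f (mu φ v))).testBit (mu φ v) = true := by
    intro v
    rw [maskOf_mem]
    have := hmin (mu φ v)
    rwa [minIndex_mu (hex v)] at this
  set t0 := mu φ 0 with ht0
  set δ₀ : ℕ → ℕ := fun i => bif (maskOf (f i)).testBit i then i else t0 with hδ₀def
  have hδ₀c : Computable δ₀ :=
    Computable.cond (htestBit.to_comp.comp hmaskf Computable.id) Computable.id
      (Computable.const t0)
  have hself : ∀ i, (maskOf (f (δ₀ i))).testBit (δ₀ i) = true := by
    intro i
    cases hb : (maskOf (f i)).testBit i with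
    | false =>
      have hd : δ₀ i = t0 := by rw [hδ₀def]; simp [hb]
      rw [hd]; exact hmu_mem 0
    | true =>
      have hd : δ₀ i = i := by rw [hδ₀def]; simp [hb]
      rw [hd]; exact hb
  set Λ₀ : ℕ → ℕ := fun i => (maskOf (f (δ₀ i))) % 2 ^ (δ₀ i) with hΛ₀def
  have hΛ₀c : Computable Λ₀ :=
    Primrec.nat_mod.to_comp.comp (hmaskf.comp hδ₀c)
      (hpow2.to_comp.comp (Computable.const 2) hδ₀c)
  have hΛ₀mem : ∀ i x, Mmem x (Λ₀ i) ↔ (Mmem x (maskOf (f (δ₀ i))) ∧ x < δ₀ i) := by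
    intro i x
    have heq : Λ₀ i = (maskOf (f (δ₀ i))) % 2 ^ (δ₀ i) := by rw [hΛ₀def]
    rw [heq]
    unfold Mmem
    rw [Nat.testBit_mod_two_pow]
    constructor
    · intro h
      have h1 := Bool.and_elim_left h
      have h2 := Bool.and_elim_right h
      exact ⟨h2, of_decide_eq_true h1⟩
    · rintro ⟨h1, h2⟩
      simp [h1, h2]
  apply no_data φ hφ hcb (k - 1) δ₀ Λ₀ hδ₀c hΛ₀c
  · -- cardinality
    intro i
    have hsub : bitF (Λ₀ i) ⊆ (f (δ₀ i)).erase (δ₀ i) := by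
      intro x hx
      have h1 := (hΛ₀mem i x).1 (mem_bitF.1 hx)
      refine Finset.mem_erase.2 ⟨by omega, (maskOf_mem _ _).1 h1.1⟩
    have hmem0 : δ₀ i ∈ f (δ₀ i) := (maskOf_mem _ _).1 (hself i)
    calc Mcard (Λ₀ i) ≤ ((f (δ₀ i)).erase (δ₀ i)).card := Finset.card_le_card hsub
      _ = (f (δ₀ i)).card - 1 := Finset.card_erase_of_mem hmem0
      _ ≤ k - 1 := by have := hcard (δ₀ i); omega
  · -- membership
    intro i
    have h1 : minIndex φ (δ₀ i) ∈ f (δ₀ i) := hmin _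
    have h2 : minIndex φ (δ₀ i) ≤ δ₀ i := minIndex_le_self φ _
    rcases Nat.lt_or_ge (minIndex φ (δ₀ i)) (δ₀ i) with h | h
    · exact Or.inl ((hΛ₀mem i _).2 ⟨(maskOf_mem _ _).2 h1, h⟩)
    · exact Or.inr (by omega)
  · -- unbounded values
    intro n
    refine ⟨mu φ (n + 1), n + 1, by omega, ?_⟩
    have hδmu : δ₀ (mu φ (n + 1)) = mu φ (n + 1) := by
      rw [hδ₀def]
      simp [hmu_mem (n + 1)]
    rw [hδmu, mu_spec (hex (n + 1))]
    exact Omega_zero (n + 1)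
end
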